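/- If the spin-1 polarization-scaling map Φ is positive, i.e., Φ(X) is positive semidefinite for every positive semidefinite X ∈ M₃(ℂ), then |λᵢ| ≤ 1 for each i ∈ {1,2,3}. -/

import Mathlib

open Matrix Kronecker
open scoped ComplexOrder

/-- The spin-1 angular momentum matrix J₁. -/
noncomputable def spinOneJ1 : Matrix (Fin 3) (Fin 3) ℂ :=
  ((1 / Real.sqrt 2 : ℝ) : ℂ) • !![0, 1, 0; 1, 0, 1; 0, 1, 0]

/-- The spin-1 angular momentum matrix J₂. -/
noncomputable def spinOneJ2 : Matrix (Fin 3) (Fin 3) ℂ :=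
  ((1 / Real.sqrt 2 : ℝ) : ℂ) • !![0, -Complex.I, 0; Complex.I, 0, -Complex.I; 0, Complex.I, 0]

/-- The spin-1 angular momentum matrix J₃. -/
def spinOneJ3 : Matrix (Fin 3) (Fin 3) ℂ := !![1, 0, 0; 0, 0, 0; 0, 0, -1]

/-- The spin-1 polarization-scaling map
`Φ(X) = (1/3)·tr(X)·I₃ + (1/2)·Σᵢ λᵢ·tr(X Jᵢ)·Jᵢ`. -/
noncomputable def Phi3 (l1 l2 l3 : ℝ) (X : Matrix (Fin 3) (Fin 3) ℂ) :
    Matrix (Fin 3) (Fin 3) ℂ :=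
  (1 / 3 : ℂ) • X.trace • (1 : Matrix (Fin 3) (Fin 3) ℂ) +
    (1 / 2 : ℂ) • ((l1 : ℂ) • (X * spinOneJ1).trace • spinOneJ1 +
      (l2 : ℂ) • (X * spinOneJ2).trace • spinOneJ2 +
      (l3 : ℂ) • (X * spinOneJ3).trace • spinOneJ3)

set_option maxHeartbeats 2000000 in
theorem spin_one_map_positive_implies_abs_le_one (l1 l2 l3 : ℝ)
    (hpos : ∀ X : Matrix (Fin 3) (Fin 3) ℂ, X.PosSemidef → (Phi3 l1 l2 l3 X).PosSemidef) :
    |l1| ≤ 1 ∧ |l2| ≤ 1 ∧ |l3| ≤ 1 := by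
  have hs2 : ((Real.sqrt 2 : ℝ):ℂ) * ((Real.sqrt 2 : ℝ):ℂ) = 2 := by
    norm_cast
    exact Real.mul_self_sqrt (by norm_num)
  have hinv : ((Real.sqrt 2 : ℝ):ℂ) * ((Real.sqrt 2 : ℝ):ℂ)⁻¹ = 1 :=
    mul_inv_cancel₀ (Complex.ofReal_ne_zero.mpr (by positivity))
  -- λ₁ bounds
  have hX1 := Matrix.posSemidef_conjTranspose_mul_self !![1,((Real.sqrt 2:ℝ):ℂ),1]
  have h1u := (hpos _ hX1).dotProduct_mulVec_nonneg ![1,-((Real.sqrt 2:ℝ):ℂ),1]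
  have h1l := (hpos _ hX1).dotProduct_mulVec_nonneg ![1,((Real.sqrt 2:ℝ):ℂ),1]
  simp [Phi3, spinOneJ1, spinOneJ2, spinOneJ3, Matrix.mulVec, dotProduct,
    Matrix.trace, Matrix.diag, Matrix.mul_apply, Fin.sum_univ_three, Matrix.one_apply,
    Matrix.conjTranspose_apply, hs2, hinv, mul_assoc] at h1u h1l
  have g1u : (0:ℂ) ≤ ((16/3 - 8*l1 : ℝ) : ℂ) := by
    convert h1u using 1
    push_cast
    field_simp
    linear_combination (-8) * hs2
  have g1l : (0:ℂ) ≤ ((16/3 + 8*l1 : ℝ) : ℂ) := by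
    convert h1l using 1
    push_cast
    field_simp
    linear_combination (-8) * hs2
  -- λ₂ bounds
  have hX2 := Matrix.posSemidef_conjTranspose_mul_self
    !![1, Complex.I*((Real.sqrt 2:ℝ):ℂ), -1]
  have h2u := (hpos _ hX2).dotProduct_mulVec_nonneg ![1, -(Complex.I*((Real.sqrt 2:ℝ):ℂ)), -1]
  have h2l := (hpos _ hX2).dotProduct_mulVec_nonneg ![1, Complex.I*((Real.sqrt 2:ℝ):ℂ), -1]
  simp [Phi3, spinOneJ1, spinOneJ2, spinOneJ3, Matrix.mulVec, dotProduct,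
    Matrix.trace, Matrix.diag, Matrix.mul_apply, Fin.sum_univ_three, Matrix.one_apply,
    Matrix.conjTranspose_apply, hs2, hinv, mul_assoc, Complex.mul_conj] at h2u h2l
  have g2l : (0:ℂ) ≤ ((16/3 + 8*l2 : ℝ) : ℂ) := by
    convert h2u using 1
    push_cast
    field_simp
    linear_combination (48*(l2:ℂ) + 8*((Real.sqrt 2:ℝ):ℂ)^2 - 2*((Real.sqrt 2:ℝ):ℂ)^4*(Complex.I^2-1)) * Complex.I_sq + (-2*((Real.sqrt 2:ℝ):ℂ)^2 - 12) * hs2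
  have g2u : (0:ℂ) ≤ ((16/3 - 8*l2 : ℝ) : ℂ) := by
    convert h2l using 1
    push_cast
    field_simp
    linear_combination (-48*(l2:ℂ) + 8*((Real.sqrt 2:ℝ):ℂ)^2 - 2*((Real.sqrt 2:ℝ):ℂ)^4*(Complex.I^2-1)) * Complex.I_sq + (-2*((Real.sqrt 2:ℝ):ℂ)^2 - 12) * hs2
  -- λ₃ bounds
  have hX3 := Matrix.posSemidef_conjTranspose_mul_self !![(1:ℂ),0,0]
  have h3u := (hpos _ hX3).dotProduct_mulVec_nonneg ![0,0,1]
  have h3l := (hpos _ hX3).dotProduct_mulVec_nonneg ![1,0,0]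
  simp [Phi3, spinOneJ1, spinOneJ2, spinOneJ3, Matrix.mulVec, dotProduct,
    Matrix.trace, Matrix.diag, Matrix.mul_apply, Fin.sum_univ_three, Matrix.one_apply,
    Matrix.conjTranspose_apply, hs2, hinv] at h3u h3l
  rw [Complex.zero_le_real] at g1u g1l g2u g2l
  have h3u' : (2⁻¹ * l3 : ℝ) ≤ 3⁻¹ := by
    have : ((2⁻¹ * l3 : ℝ):ℂ) ≤ ((3⁻¹ : ℝ):ℂ) := by push_cast; convert h3u using 2
    exact_mod_cast this
  have h3l' : (0:ℝ) ≤ 3⁻¹ + 2⁻¹ * l3 := by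
    have : ((0:ℝ):ℂ) ≤ ((3⁻¹ + 2⁻¹ * l3 : ℝ):ℂ) := by push_cast; convert h3l using 2
    exact_mod_cast this
  refine ⟨abs_le.2 ⟨by linarith, by linarith⟩, abs_le.2 ⟨by linarith, by linarith⟩,
    abs_le.2 ⟨by linarith, by linarith⟩⟩
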